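/- For every ε > 0 there exists δ = δ(ε) > 0 such that: if G is a graph with m edges and λ(G) ≥ (1 + ε)·sqrt(m), then G contains a cycle C_ℓ of every length ℓ with 3 ≤ ℓ ≤ δ·sqrt(m). -/

import Mathlib

open Finset Matrix

section Aux
variable {V : Type} [Fintype V] [DecidableEq V] (G : SimpleGraph V) [DecidableRel G.Adj]

set_option linter.unusedSectionVars false

private lemma swap_nbr_sum (f : V → V → ℝ) :
    ∑ v, ∑ w ∈ G.neighborFinset v, f v w = ∑ w, ∑ v ∈ G.neighborFinset w, f v w := by
  simp only [SimpleGraph.neighborFinset_eq_filter, Finset.sum_filter]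
  rw [Finset.sum_comm]
  refine Finset.sum_congr rfl fun w _ => Finset.sum_congr rfl fun v _ => ?_
  exact if_congr (G.adj_comm v w) rfl rfl

private lemma pair_count (P Q : Finset V) :
    ∑ w ∈ P, (Q.filter (fun v => G.Adj w v)).card
      = ∑ v ∈ Q, (P.filter (fun w => G.Adj v w)).card := by
  simp only [Finset.card_filter]
  rw [Finset.sum_comm]
  refine Finset.sum_congr rfl fun v _ => Finset.sum_congr rfl fun w _ => ?_
  exact if_congr (G.adj_comm w v) rfl rfl

private lemma extract (q : ℝ) (hq : 0 < q) :
    ∀ (T : Finset V),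
      2 * q * T.card ≤ (∑ v ∈ T, ((T.filter (fun w => G.Adj v w)).card : ℝ)) →
      T.Nonempty →
      ∃ T', T' ⊆ T ∧ T'.Nonempty ∧
        ∀ v ∈ T', q ≤ ((T'.filter (fun w => G.Adj v w)).card : ℝ) := by
  intro T
  induction T using Finset.strongInduction with
  | _ T ih =>
    intro hbig hne
    by_cases hall : ∀ v ∈ T, q ≤ ((T.filter (fun w => G.Adj v w)).card : ℝ)
    · exact ⟨T, Finset.Subset.refl T, hne, hall⟩
    push_neg at hall
    obtain ⟨v₀, hv₀, hlt⟩ := hall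
    set T' := T.erase v₀ with hT'
    have hins : T = insert v₀ T' := by
      rw [hT', Finset.insert_erase hv₀]
    have hv₀T' : v₀ ∉ T' := Finset.notMem_erase _ _
    -- degree splitting
    have hdegsplit : ∀ v ∈ T', (T.filter (fun w => G.Adj v w)).card
        = (T'.filter (fun w => G.Adj v w)).card + (if G.Adj v v₀ then 1 else 0) := by
      intro v _
      conv_lhs => rw [hins]
      rw [Finset.filter_insert]
      split
      · rw [Finset.card_insert_of_notMem (by simp [hv₀T'])]
      · simp
    have hdv₀ : (T.filter (fun w => G.Adj v₀ w)).card
        = (T'.filter (fun w => G.Adj v₀ w)).card := by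
      conv_lhs => rw [hins]
      rw [Finset.filter_insert, if_neg (G.irrefl)]
    have hcnt : (T'.filter (fun v => G.Adj v v₀)).card
        = (T'.filter (fun w => G.Adj v₀ w)).card := by
      congr 1; ext w; simp [G.adj_comm]
    have hsum : ∑ v ∈ T, ((T.filter (fun w => G.Adj v w)).card : ℕ)
        = (∑ v ∈ T', (T'.filter (fun w => G.Adj v w)).card)
          + 2 * (T.filter (fun w => G.Adj v₀ w)).card := by
      rw [← Finset.add_sum_erase T _ hv₀, ← hT']
      have h1 : ∑ v ∈ T', (T.filter (fun w => G.Adj v w)).card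
          = ∑ v ∈ T', ((T'.filter (fun w => G.Adj v w)).card + (if G.Adj v v₀ then 1 else 0)) :=
        Finset.sum_congr rfl hdegsplit
      rw [h1, Finset.sum_add_distrib]
      have h2 : ∑ v ∈ T', (if G.Adj v v₀ then 1 else 0)
          = (T'.filter (fun v => G.Adj v v₀)).card := (Finset.card_filter _ _).symm
      rw [h2, hcnt, hdv₀]
      ring
    -- T' nonempty
    have hT'ne : T'.Nonempty := by
      rcases Finset.eq_empty_or_nonempty T' with h | h
      · exfalso
        have hTsing : T = {v₀} := by rw [hins, h]; rfl
        have hz : (T.filter (fun w => G.Adj v₀ w)).card = 0 := by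
          rw [hTsing, Finset.filter_singleton, if_neg (G.irrefl)]
          rfl
        have hlt' : ((T.filter (fun w => G.Adj v₀ w)).card : ℝ) < q := hlt
        have hcard : (T.card : ℝ) = 1 := by rw [hTsing]; simp
        have hb := hbig
        rw [hcard] at hb
        have hsum1 : (∑ v ∈ T, ((T.filter (fun w => G.Adj v w)).card : ℝ)) = 0 := by
          rw [hTsing]
          simp [Finset.filter_singleton, G.irrefl]
        rw [hsum1] at hb
        nlinarith
      · exact h
    -- cardinal arithmetic
    have hcardT : (T.card : ℝ) = (T'.card : ℝ) + 1 := by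
      rw [hins, Finset.card_insert_of_notMem hv₀T']
      push_cast; ring
    have hsumR : (∑ v ∈ T, ((T.filter (fun w => G.Adj v w)).card : ℝ))
        = (∑ v ∈ T', ((T'.filter (fun w => G.Adj v w)).card : ℝ))
          + 2 * ((T.filter (fun w => G.Adj v₀ w)).card : ℝ) := by
      exact_mod_cast congrArg (fun n : ℕ => (n : ℝ)) hsum
    have hbig' : 2 * q * T'.card ≤ ∑ v ∈ T', ((T'.filter (fun w => G.Adj v w)).card : ℝ) := by
      have h1 : 2 * q * ((T'.card : ℝ) + 1)
          ≤ (∑ v ∈ T', ((T'.filter (fun w => G.Adj v w)).card : ℝ))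
            + 2 * ((T.filter (fun w => G.Adj v₀ w)).card : ℝ) := by
        rw [← hsumR, ← hcardT]; exact hbig
      nlinarith [hlt.le]
    obtain ⟨T'', hsub, hne'', hdeg''⟩ := ih T' (Finset.erase_ssubset hv₀) hbig' hT'ne
    exact ⟨T'', hsub.trans (Finset.erase_subset _ _), hne'', hdeg''⟩

private lemma path_exists (T : Finset V) (hne : T.Nonempty) :
    ∀ j : ℕ, (∀ v ∈ T, j ≤ (T.filter (fun w => G.Adj v w)).card) →
      ∃ (a b : V) (p : G.Walk a b), p.IsPath ∧ p.length = j ∧ ∀ x ∈ p.support, x ∈ T := by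
  intro j
  induction j with
  | zero =>
    intro _
    obtain ⟨v₀, hv₀⟩ := hne
    exact ⟨v₀, v₀, SimpleGraph.Walk.nil, SimpleGraph.Walk.IsPath.nil, rfl, by
      intro x hx
      simp only [SimpleGraph.Walk.support_nil, List.mem_singleton] at hx
      rwa [hx]⟩
  | succ j ihj =>
    intro hdeg
    obtain ⟨a, b, p, hp, hlen, hsup⟩ := ihj (fun v hv => le_trans (Nat.le_succ j) (hdeg v hv))
    have haT : a ∈ T := hsup a p.start_mem_support
    have hdega : j + 1 ≤ (T.filter (fun w => G.Adj a w)).card := hdeg a haT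
    have hsupcard : p.support.toFinset.card = j + 1 := by
      rw [List.toFinset_card_of_nodup hp.support_nodup, SimpleGraph.Walk.length_support, hlen]
    have hex : ∃ w ∈ T.filter (fun w => G.Adj a w), w ∉ p.support := by
      by_contra hcon
      push_neg at hcon
      have hsub : T.filter (fun w => G.Adj a w) ⊆ p.support.toFinset.erase a := by
        intro w hw
        rw [Finset.mem_erase]
        refine ⟨?_, List.mem_toFinset.2 (hcon w hw)⟩
        have : G.Adj a w := (Finset.mem_filter.1 hw).2
        exact this.ne'
      have := Finset.card_le_card hsub
      rw [Finset.card_erase_of_mem (List.mem_toFinset.2 p.start_mem_support), hsupcard] at this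
      omega
    obtain ⟨w, hwf, hwns⟩ := hex
    obtain ⟨hwT, hadj⟩ := Finset.mem_filter.1 hwf
    refine ⟨w, b, SimpleGraph.Walk.cons hadj.symm p, ?_, ?_, ?_⟩
    · exact (SimpleGraph.Walk.cons_isPath_iff _ _).2 ⟨hp, hwns⟩
    · simp [hlen]
    · intro x hx
      rw [SimpleGraph.Walk.support_cons, List.mem_cons] at hx
      rcases hx with h | h
      · rwa [h]
      · exact hsup x h

end Aux

/-- `lam` is the largest adjacency eigenvalue (spectral radius) of `G`. -/
def IsSpectralRadius {V : Type*} [Fintype V] [DecidableEq V] (G : SimpleGraph V)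
    [DecidableRel G.Adj] (lam : ℝ) : Prop :=
  (∃ x : V → ℝ, x ≠ 0 ∧ (G.adjMatrix ℝ) *ᵥ x = lam • x) ∧
  ∀ μ : ℝ, (∃ x : V → ℝ, x ≠ 0 ∧ (G.adjMatrix ℝ) *ᵥ x = μ • x) → μ ≤ lam

set_option maxHeartbeats 1000000 in
/-- Graphs with `λ(G) ≥ (1+ε)√m` contain cycles of every length
`3 ≤ ℓ ≤ δ√m`. -/
theorem stmt_18 (ε : ℝ) (hε : 0 < ε) :
    ∃ δ : ℝ, 0 < δ ∧
      ∀ (V : Type) [Fintype V] [DecidableEq V] (G : SimpleGraph V)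
        [DecidableRel G.Adj] (lam : ℝ), IsSpectralRadius G lam →
        (1 + ε) * Real.sqrt (G.edgeFinset.card : ℝ) ≤ lam →
        ∀ ℓ : ℕ, 3 ≤ ℓ → (ℓ : ℝ) ≤ δ * Real.sqrt (G.edgeFinset.card : ℝ) →
          ∃ (v : V) (w : G.Walk v v), w.IsCycle ∧ w.length = ℓ := by
  refine ⟨ε, hε, ?_⟩
  intro V _ _ G _ lam hspec hlam ℓ hℓ3 hℓ
  set m : ℕ := G.edgeFinset.card with hm
  rcases Nat.eq_zero_or_pos m with hm0 | hm1
  · exfalso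
    rw [hm0] at hℓ
    norm_num [Real.sqrt_zero] at hℓ
    have : (3 : ℝ) ≤ (ℓ : ℝ) := by exact_mod_cast hℓ3
    linarith
  obtain ⟨⟨x, hx0, hxe⟩, -⟩ := hspec
  have hm1R : (1 : ℝ) ≤ (m : ℝ) := by exact_mod_cast hm1
  set sq : ℝ := Real.sqrt (m : ℝ) with hsq
  have hsq0 : 0 < sq := Real.sqrt_pos.2 (by linarith)
  set c : ℝ := ε * sq with hc
  have hc0 : 0 < c := mul_pos hε hsq0
  have hlam0 : 0 ≤ lam := le_trans (by positivity) hlam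
  have hlamc : sq ≤ lam - c := by
    have : (1 + ε) * sq = sq + c := by rw [hc]; ring
    linarith [hlam, this]
  have heig : ∀ v, ∑ w ∈ G.neighborFinset v, x w = lam * x v := by
    intro v
    have h1 := congrFun hxe v
    rwa [SimpleGraph.adjMatrix_mulVec_apply, Pi.smul_apply, smul_eq_mul] at h1
  set y : V → ℝ := fun v => |x v| with hy
  have hy0 : ∀ v, 0 ≤ y v := fun v => abs_nonneg _
  set z : V → ℝ := fun v => ∑ w ∈ G.neighborFinset v, y w with hzdef
  have hz0 : ∀ v, 0 ≤ z v := fun v => Finset.sum_nonneg fun w _ => hy0 w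
  have hz : ∀ v, lam * y v ≤ z v := by
    intro v
    have h1 : lam * y v = |lam * x v| := by
      rw [abs_mul, abs_of_nonneg hlam0]
    rw [h1, ← heig v]
    exact le_trans (Finset.abs_sum_le_sum_abs _ _) (le_of_eq rfl)
  -- degrees as reals
  set D : V → ℝ := fun v => (G.degree v : ℝ) with hD
  set s : V → ℝ := fun v => ∑ w ∈ G.neighborFinset v, D w with hs
  -- key summed inequality
  have key : ∑ v, (lam * (lam - c)) * y v ≤ ∑ v, (s v - c * D v) * y v := by
    have pointwise : ∀ v, (lam * (lam - c)) * y v ≤ (∑ w ∈ G.neighborFinset v, z w) - c * z v := by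
      intro v
      have h1 : lam * z v ≤ ∑ w ∈ G.neighborFinset v, z w := by
        have : lam * z v = ∑ w ∈ G.neighborFinset v, lam * y w := by
          rw [hzdef, Finset.mul_sum]
        rw [this]
        exact Finset.sum_le_sum fun w _ => hz w
      have h2 : (lam - c) * (lam * y v) ≤ (lam - c) * z v :=
        mul_le_mul_of_nonneg_left (hz v) (by linarith [hsq0, hlamc])
      nlinarith [hz v, hz0 v]
    have hsum1 : ∑ v, (lam * (lam - c)) * y v
        ≤ ∑ v, ((∑ w ∈ G.neighborFinset v, z w) - c * z v) :=
      Finset.sum_le_sum fun v _ => pointwise v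
    -- swap sums
    have hswap1 : ∑ v, ∑ w ∈ G.neighborFinset v, z w = ∑ j, s j * y j := by
      rw [swap_nbr_sum G (fun v w => z w)]
      have h1 : ∀ w, ∑ v ∈ G.neighborFinset w, z w = D w * z w := by
        intro w
        rw [Finset.sum_const, nsmul_eq_mul]
        rfl
      rw [Finset.sum_congr rfl fun w _ => h1 w]
      have h2 : ∀ w, D w * z w = ∑ j ∈ G.neighborFinset w, D w * y j := by
        intro w
        rw [hzdef, Finset.mul_sum]
      rw [Finset.sum_congr rfl fun w _ => h2 w]
      rw [swap_nbr_sum G (fun w j => D w * y j)]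
      refine Finset.sum_congr rfl fun j _ => ?_
      rw [hs, Finset.sum_mul]
    have hswap2 : ∑ v, z v = ∑ w, D w * y w := by
      have : ∑ v, z v = ∑ v, ∑ w ∈ G.neighborFinset v, y w := rfl
      rw [this, swap_nbr_sum G (fun v w => y w)]
      refine Finset.sum_congr rfl fun w _ => ?_
      rw [Finset.sum_const, nsmul_eq_mul]
      rfl
    calc ∑ v, (lam * (lam - c)) * y v
        ≤ ∑ v, ((∑ w ∈ G.neighborFinset v, z w) - c * z v) := hsum1
      _ = (∑ v, ∑ w ∈ G.neighborFinset v, z w) - c * ∑ v, z v := by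
          rw [Finset.sum_sub_distrib, Finset.mul_sum]
      _ = (∑ j, s j * y j) - c * ∑ w, D w * y w := by rw [hswap1, hswap2]
      _ = ∑ v, (s v - c * D v) * y v := by
          rw [Finset.mul_sum, ← Finset.sum_sub_distrib]
          refine Finset.sum_congr rfl fun v _ => ?_
          ring
  -- select a good vertex
  have hxex : ∃ v, 0 < y v := by
    have : ∃ v, x v ≠ 0 := by
      by_contra hcon
      push_neg at hcon
      exact hx0 (funext fun v => hcon v)
    obtain ⟨v, hv⟩ := this
    exact ⟨v, abs_pos.2 hv⟩
  have hsel : ∃ u, 0 < y u ∧ lam * (lam - c) ≤ s u - c * D u := by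
    by_contra hcon
    push_neg at hcon
    obtain ⟨v₁, hv₁⟩ := hxex
    have hstrict : ∑ v, (s v - c * D v) * y v < ∑ v, (lam * (lam - c)) * y v := by
      refine Finset.sum_lt_sum (fun v _ => ?_) ⟨v₁, Finset.mem_univ v₁, ?_⟩
      · rcases eq_or_lt_of_le (hy0 v) with h | h
        · rw [← h]; simp
        · exact mul_le_mul_of_nonneg_right (le_of_lt (hcon v h)) (hy0 v)
      · exact mul_lt_mul_of_pos_right (hcon v₁ hv₁) hv₁
    linarith [key]
  obtain ⟨u, hyu, hgood⟩ := hsel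
  have hprod : (1 + ε) * (m : ℝ) ≤ lam * (lam - c) := by
    have h1 : (1 + ε) * sq * sq ≤ lam * (lam - c) := by
      apply mul_le_mul hlam hlamc (le_of_lt hsq0) hlam0
    have h2 : sq * sq = (m : ℝ) := Real.mul_self_sqrt (by positivity)
    nlinarith
  -- combinatorial counting
  set S : Finset V := G.neighborFinset u with hS
  have hScard : S.card = G.degree u := rfl
  -- snat and e2
  set e2 : ℕ := ∑ v ∈ S, (S.filter (fun w => G.Adj v w)).card with he2
  set snat : ℕ := ∑ w ∈ S, G.degree w with hsnat
  have hsu : s u = (snat : ℝ) := by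
    rw [hs, hsnat, Nat.cast_sum]
  -- degree split for w : degree w = inside + outside
  have hdegsplit : ∀ w : V, G.degree w
      = (S.filter (fun v => G.Adj w v)).card + (Sᶜ.filter (fun v => G.Adj w v)).card := by
    intro w
    have h1 : G.neighborFinset w = S.filter (fun v => G.Adj w v) ∪ Sᶜ.filter (fun v => G.Adj w v) := by
      ext v
      simp only [SimpleGraph.mem_neighborFinset, Finset.mem_union, Finset.mem_filter,
        Finset.mem_compl]
      tauto
    have h2 : Disjoint (S.filter (fun v => G.Adj w v)) (Sᶜ.filter (fun v => G.Adj w v)) := by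
      exact Finset.disjoint_filter_filter disjoint_compl_right
    rw [SimpleGraph.degree, h1, Finset.card_union_of_disjoint h2]
  have hkeynat : 2 * snat ≤ 2 * m + e2 := by
    have hsplit : snat = e2 + ∑ w ∈ S, (Sᶜ.filter (fun v => G.Adj w v)).card := by
      rw [hsnat, he2, ← Finset.sum_add_distrib]
      refine Finset.sum_congr rfl fun w _ => hdegsplit w
    have hR : ∑ w ∈ S, (Sᶜ.filter (fun v => G.Adj w v)).card
        = ∑ v ∈ Sᶜ, (S.filter (fun w => G.Adj v w)).card := pair_count G S Sᶜ
    have hRle : ∑ v ∈ Sᶜ, (S.filter (fun w => G.Adj v w)).card ≤ ∑ v ∈ Sᶜ, G.degree v := by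
      refine Finset.sum_le_sum fun v _ => ?_
      rw [SimpleGraph.degree]
      apply Finset.card_le_card
      intro w hw
      rw [SimpleGraph.mem_neighborFinset]
      exact (Finset.mem_filter.1 hw).2
    have htot : ∑ w ∈ S, G.degree w + ∑ v ∈ Sᶜ, G.degree v = 2 * m := by
      rw [Finset.sum_add_sum_compl, SimpleGraph.sum_degrees_eq_twice_card_edges]
    omega
  -- real consequences
  have hsnat_lb : (1 + ε) * (m : ℝ) + c * D u ≤ (snat : ℝ) := by
    have := le_trans hprod hgood
    rw [hsu] at this
    linarith
  have he2_lb : 2 * ε * (m : ℝ) + 2 * c * D u ≤ (e2 : ℝ) := by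
    have h1 : (2 * snat : ℝ) ≤ 2 * (m : ℝ) + (e2 : ℝ) := by exact_mod_cast hkeynat
    push_cast at h1 ⊢
    nlinarith [hsnat_lb]
  have hSne : S.Nonempty := by
    rcases Finset.eq_empty_or_nonempty S with h | h
    · exfalso
      have : e2 = 0 := by rw [he2, h]; rfl
      rw [this] at he2_lb
      have hDu0 : D u = (S.card : ℝ) := by rw [hD, hScard]
      rw [h] at hDu0
      simp at hDu0
      rw [hDu0] at he2_lb
      norm_num at he2_lb
      nlinarith [mul_pos hε (lt_of_lt_of_le one_pos hm1R)]
    · exact h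
  -- extract min-degree subset
  have hbig : 2 * c * (S.card : ℝ) ≤ ∑ v ∈ S, ((S.filter (fun w => G.Adj v w)).card : ℝ) := by
    have h1 : (∑ v ∈ S, ((S.filter (fun w => G.Adj v w)).card : ℝ)) = (e2 : ℝ) := by
      rw [he2, Nat.cast_sum]
    have h2 : (S.card : ℝ) = D u := by rw [hD, hScard]
    rw [h1, h2]
    nlinarith [he2_lb, mul_pos hε (lt_of_lt_of_le one_pos hm1R)]
  obtain ⟨T, hTS, hTne, hTdeg⟩ := extract G c hc0 S hbig hSne
  -- min degree at least ℓ
  have hℓc : (ℓ : ℝ) ≤ c := by rw [hc]; exact hℓ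
  have hTdegℓ : ∀ v ∈ T, ℓ - 2 ≤ (T.filter (fun w => G.Adj v w)).card := by
    intro v hv
    have h1 : (ℓ : ℝ) ≤ ((T.filter (fun w => G.Adj v w)).card : ℝ) := le_trans hℓc (hTdeg v hv)
    have h2 : ℓ ≤ (T.filter (fun w => G.Adj v w)).card := by exact_mod_cast h1
    omega
  obtain ⟨a, b, p, hp, hlen, hsup⟩ := path_exists G T hTne (ℓ - 2) hTdegℓ
  have hsupS : ∀ x ∈ p.support, x ∈ S := fun x hx => hTS (hsup x hx)
  have hua : G.Adj u a := by
    have := hsupS a p.start_mem_support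
    rwa [hS, SimpleGraph.mem_neighborFinset] at this
  have hub : G.Adj u b := by
    have := hsupS b p.end_mem_support
    rwa [hS, SimpleGraph.mem_neighborFinset] at this
  have huns : u ∉ p.support := by
    intro h
    have := hsupS u h
    rw [hS, SimpleGraph.mem_neighborFinset] at this
    exact G.irrefl this
  have hab : a ≠ b := by
    intro h
    subst h
    have := SimpleGraph.Walk.isPath_iff_eq_nil.1 hp
    subst this
    simp at hlen
    omega
  -- build the cycle
  set r : G.Walk u a := SimpleGraph.Walk.cons hub p.reverse with hr
  have hrp : r.IsPath := by
    rw [hr, SimpleGraph.Walk.cons_isPath_iff]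
    refine ⟨hp.reverse, ?_⟩
    rw [SimpleGraph.Walk.support_reverse, List.mem_reverse]
    exact huns
  set w : G.Walk u u := SimpleGraph.Walk.cons hua r.reverse with hw
  have hcyc : w.IsCycle := by
    rw [hw, SimpleGraph.Walk.cons_isCycle_iff]
    refine ⟨hrp.reverse, ?_⟩
    intro hmem
    rw [SimpleGraph.Walk.edges_reverse, List.mem_reverse, hr,
      SimpleGraph.Walk.edges_cons, List.mem_cons] at hmem
    rcases hmem with h | h
    · rw [Sym2.congr_right] at h
      exact hab h
    · rw [SimpleGraph.Walk.edges_reverse, List.mem_reverse] at h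
      exact huns (p.fst_mem_support_of_mem_edges h)
  refine ⟨u, w, hcyc, ?_⟩
  rw [hw, SimpleGraph.Walk.length_cons, SimpleGraph.Walk.length_reverse, hr,
    SimpleGraph.Walk.length_cons, SimpleGraph.Walk.length_reverse, hlen]
  omega
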